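/- Let m > 1, let b₀, b₃ > 0 and b₂ ∈ ℝ with b₀² + b₂² + b₃² = 1, and define ψ : ℝ² → ℝ⁶ by ψ(u,v) = (−√(m²−1) u, b₀ cos(m u / b₀), b₀ sin(m u / b₀), b₂, b₃ sin(v/b₃), b₃ cos(v/b₃)). Let ν(u,v) := (0, ψ₂(u,v), ψ₃(u,v), ψ₄(u,v), ψ₅(u,v), ψ₆(u,v)) and W := ∂²ψ/∂u² + ∂²ψ/∂v² + (m²+1) ν. Then ∂W/∂u vanishes identically on ℝ² if and only if b₀² (m² + 1) = m². -/

import Mathlib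

open Real

/-- The candidate surface `ψ` in `𝔼¹₁ × S⁴ ⊂ ℝ⁶` from the proof of Theorem 6.1. -/
noncomputable def psiRS (m b₀ b₂ b₃ : ℝ) (u v : ℝ) : Fin 6 → ℝ :=
  ![-(Real.sqrt (m ^ 2 - 1)) * u,
    b₀ * Real.cos (m * u / b₀),
    b₀ * Real.sin (m * u / b₀),
    b₂,
    b₃ * Real.sin (v / b₃),
    b₃ * Real.cos (v / b₃)]

/-- The position vector `ν = (0, ψ₂, …, ψ₆)` in the `S⁴` factor. -/
noncomputable def nuRS (m b₀ b₂ b₃ : ℝ) (u v : ℝ) : Fin 6 → ℝ := fun i =>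
  if i = 0 then 0 else psiRS m b₀ b₂ b₃ u v i

/-- `W = ψ_uu + ψ_vv + (m²+1) ν`, twice the mean curvature vector of `ψ` in `𝔼¹₁ × S⁴`. -/
noncomputable def WRS (m b₀ b₂ b₃ : ℝ) (u v : ℝ) : Fin 6 → ℝ := fun i =>
  deriv (fun u' => deriv (fun u'' => psiRS m b₀ b₂ b₃ u'' v i) u') u +
    deriv (fun v' => deriv (fun v'' => psiRS m b₀ b₂ b₃ u v'' i) v') v +
    (m ^ 2 + 1) * nuRS m b₀ b₂ b₃ u v i

section aux

variable (m b₀ b₂ b₃ u v : ℝ)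

lemma psiRS0 : psiRS m b₀ b₂ b₃ u v 0 = -(Real.sqrt (m ^ 2 - 1)) * u := rfl
lemma psiRS1 : psiRS m b₀ b₂ b₃ u v 1 = b₀ * Real.cos (m * u / b₀) := rfl
lemma psiRS2 : psiRS m b₀ b₂ b₃ u v 2 = b₀ * Real.sin (m * u / b₀) := rfl
lemma psiRS3 : psiRS m b₀ b₂ b₃ u v 3 = b₂ := rfl
lemma psiRS4 : psiRS m b₀ b₂ b₃ u v 4 = b₃ * Real.sin (v / b₃) := rfl
lemma psiRS5 : psiRS m b₀ b₂ b₃ u v 5 = b₃ * Real.cos (v / b₃) := rfl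

lemma hd_lin : HasDerivAt (fun u' : ℝ => m * u' / b₀) (m / b₀) u := by
  simpa using ((hasDerivAt_id u).const_mul m).div_const b₀

lemma hd_cos :
    HasDerivAt (fun u' : ℝ => b₀ * Real.cos (m * u' / b₀))
      (-(b₀ * (m / b₀)) * Real.sin (m * u / b₀)) u := by
  have h := ((Real.hasDerivAt_cos (m * u / b₀)).comp u (hd_lin m b₀ u)).const_mul b₀
  refine h.congr_deriv ?_
  ring

lemma hd_sin :
    HasDerivAt (fun u' : ℝ => b₀ * Real.sin (m * u' / b₀))
      ((b₀ * (m / b₀)) * Real.cos (m * u / b₀)) u := by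
  have h := ((Real.hasDerivAt_sin (m * u / b₀)).comp u (hd_lin m b₀ u)).const_mul b₀
  refine h.congr_deriv ?_
  ring

lemma hd_msin :
    HasDerivAt (fun u' : ℝ => -m * Real.sin (m * u' / b₀))
      (-m * (m / b₀) * Real.cos (m * u / b₀)) u := by
  have h := ((Real.hasDerivAt_sin (m * u / b₀)).comp u (hd_lin m b₀ u)).const_mul (-m)
  refine h.congr_deriv ?_
  ring

lemma hd_mcos :
    HasDerivAt (fun u' : ℝ => m * Real.cos (m * u' / b₀))
      (-(m * (m / b₀)) * Real.sin (m * u / b₀)) u := by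
  have h := ((Real.hasDerivAt_cos (m * u / b₀)).comp u (hd_lin m b₀ u)).const_mul m
  refine h.congr_deriv ?_
  ring

variable (hb₀ : b₀ ≠ 0)
include hb₀

lemma deriv_cos_comp :
    (deriv fun u' : ℝ => b₀ * Real.cos (m * u' / b₀)) =
      fun u => -m * Real.sin (m * u / b₀) := by
  funext u
  rw [(hd_cos m b₀ u).deriv]
  field_simp

lemma deriv_sin_comp :
    (deriv fun u' : ℝ => b₀ * Real.sin (m * u' / b₀)) =
      fun u => m * Real.cos (m * u / b₀) := by
  funext u
  rw [(hd_sin m b₀ u).deriv]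
  field_simp

lemma W1_eq :
    WRS m b₀ b₂ b₃ u v 1 =
      ((m ^ 2 + 1) * b₀ - m ^ 2 / b₀) * Real.cos (m * u / b₀) := by
  have h1 : (fun u'' => psiRS m b₀ b₂ b₃ u'' v 1) =
      fun u'' => b₀ * Real.cos (m * u'' / b₀) := rfl
  have h2 : (fun v'' => psiRS m b₀ b₂ b₃ u v'' 1) =
      fun _ => b₀ * Real.cos (m * u / b₀) := rfl
  simp only [WRS, nuRS, h1, h2, deriv_cos_comp m b₀ hb₀, deriv_const, psiRS1]
  rw [(hd_msin m b₀ u).deriv, if_neg (show (1 : Fin 6) ≠ 0 by decide)]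
  norm_num
  field_simp
  ring

lemma W2_eq :
    WRS m b₀ b₂ b₃ u v 2 =
      ((m ^ 2 + 1) * b₀ - m ^ 2 / b₀) * Real.sin (m * u / b₀) := by
  have h1 : (fun u'' => psiRS m b₀ b₂ b₃ u'' v 2) =
      fun u'' => b₀ * Real.sin (m * u'' / b₀) := rfl
  have h2 : (fun v'' => psiRS m b₀ b₂ b₃ u v'' 2) =
      fun _ => b₀ * Real.sin (m * u / b₀) := rfl
  simp only [WRS, nuRS, h1, h2, deriv_sin_comp m b₀ hb₀, deriv_const, psiRS2]
  rw [(hd_mcos m b₀ u).deriv, if_neg (show (2 : Fin 6) ≠ 0 by decide)]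
  norm_num
  field_simp
  ring

end aux

/-- `∂W/∂u` vanishes identically if and only if `b₀² (m² + 1) = m²`. -/
theorem WRS_parallel_iff (m b₀ b₂ b₃ : ℝ) (hm : 1 < m)
    (hb₀ : 0 < b₀) (hb₃ : 0 < b₃)
    (hrel : b₀ ^ 2 + b₂ ^ 2 + b₃ ^ 2 = 1) :
    (∀ (u v : ℝ) (i : Fin 6), deriv (fun u' => WRS m b₀ b₂ b₃ u' v i) u = 0) ↔
      b₀ ^ 2 * (m ^ 2 + 1) = m ^ 2 := by
  have hb : b₀ ≠ 0 := ne_of_gt hb₀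
  have hmne : m ≠ 0 := by positivity
  set C : ℝ := (m ^ 2 + 1) * b₀ - m ^ 2 / b₀ with hC
  have hciff : C = 0 ↔ b₀ ^ 2 * (m ^ 2 + 1) = m ^ 2 := by
    rw [hC, sub_eq_zero, eq_div_iff hb]
    constructor <;> intro h <;> nlinarith [h]
  constructor
  · intro h
    have h2 := h 0 0 2
    have hW2 : (fun u' => WRS m b₀ b₂ b₃ u' 0 2) =
        fun u' => C * Real.sin (m * u' / b₀) := by
      funext u'; exact W2_eq m b₀ b₂ b₃ u' 0 hb
    rw [hW2] at h2
    have hd : HasDerivAt (fun u' : ℝ => C * Real.sin (m * u' / b₀))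
        ((C * (m / b₀)) * Real.cos (m * 0 / b₀)) 0 := by
      have := ((Real.hasDerivAt_sin (m * 0 / b₀)).comp 0 (hd_lin m b₀ 0)).const_mul C
      refine this.congr_deriv ?_; ring
    rw [hd.deriv] at h2
    simp at h2
    rcases h2 with h2 | h2 | h2
    · exact hciff.mp h2
    · exact absurd h2 hmne
    · exact absurd h2 hb
  · intro h u v i
    have hC0 : C = 0 := hciff.mpr h
    fin_cases i
    · -- i = 0
      show deriv (fun u' => WRS m b₀ b₂ b₃ u' v (0 : Fin 6)) u = 0
      have h0 : (fun u' => WRS m b₀ b₂ b₃ u' v 0) = fun _ => 0 := by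
        funext u'
        have h1 : (fun u'' => psiRS m b₀ b₂ b₃ u'' v 0) =
            fun u'' => -(Real.sqrt (m ^ 2 - 1)) * u'' := rfl
        have h2 : (fun v'' => psiRS m b₀ b₂ b₃ u' v'' 0) =
            fun _ => -(Real.sqrt (m ^ 2 - 1)) * u' := rfl
        have h3 : (deriv fun u'' : ℝ => -(Real.sqrt (m ^ 2 - 1)) * u'') =
            fun _ : ℝ => -(Real.sqrt (m ^ 2 - 1)) := by
          funext x
          simpa using ((hasDerivAt_id x).const_mul (-(Real.sqrt (m ^ 2 - 1)))).deriv
        simp only [WRS, nuRS, h1, h2, h3, deriv_const]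
        norm_num
      rw [h0]; exact deriv_const _ _
    · -- i = 1
      show deriv (fun u' => WRS m b₀ b₂ b₃ u' v (1 : Fin 6)) u = 0
      have h0 : (fun u' => WRS m b₀ b₂ b₃ u' v 1) = fun _ => 0 := by
        funext u'
        rw [W1_eq m b₀ b₂ b₃ u' v hb, ← hC, hC0, zero_mul]
      rw [h0]; exact deriv_const _ _
    · -- i = 2
      show deriv (fun u' => WRS m b₀ b₂ b₃ u' v (2 : Fin 6)) u = 0
      have h0 : (fun u' => WRS m b₀ b₂ b₃ u' v 2) = fun _ => 0 := by
        funext u'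
        rw [W2_eq m b₀ b₂ b₃ u' v hb, ← hC, hC0, zero_mul]
      rw [h0]; exact deriv_const _ _
    · -- i = 3
      show deriv (fun u' => WRS m b₀ b₂ b₃ u' v (3 : Fin 6)) u = 0
      have h0 : (fun u' => WRS m b₀ b₂ b₃ u' v 3) =
          fun _ => (m ^ 2 + 1) * b₂ := by
        funext u'
        have h1 : (fun u'' => psiRS m b₀ b₂ b₃ u'' v 3) = fun _ => b₂ := rfl
        have h2 : (fun v'' => psiRS m b₀ b₂ b₃ u' v'' 3) = fun _ => b₂ := rfl
        simp only [WRS, nuRS, h1, h2, deriv_const, psiRS3]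
        rw [if_neg (show (3 : Fin 6) ≠ 0 by decide)]
        norm_num
      rw [h0]; exact deriv_const _ _
    · -- i = 4
      show deriv (fun u' => WRS m b₀ b₂ b₃ u' v (4 : Fin 6)) u = 0
      have h0 : (fun u' => WRS m b₀ b₂ b₃ u' v 4) =
          fun _ => deriv (fun v' => deriv (fun v'' => b₃ * Real.sin (v'' / b₃)) v') v +
            (m ^ 2 + 1) * (b₃ * Real.sin (v / b₃)) := by
        funext u'
        have h1 : (fun u'' => psiRS m b₀ b₂ b₃ u'' v 4) =
            fun _ => b₃ * Real.sin (v / b₃) := rfl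
        have h2 : (fun v'' => psiRS m b₀ b₂ b₃ u' v'' 4) =
            fun v'' => b₃ * Real.sin (v'' / b₃) := rfl
        simp only [WRS, nuRS, h1, h2, deriv_const, psiRS4]
        rw [if_neg (show (4 : Fin 6) ≠ 0 by decide)]
        norm_num
      rw [h0]; exact deriv_const _ _
    · -- i = 5
      show deriv (fun u' => WRS m b₀ b₂ b₃ u' v (5 : Fin 6)) u = 0
      have h0 : (fun u' => WRS m b₀ b₂ b₃ u' v 5) =
          fun _ => deriv (fun v' => deriv (fun v'' => b₃ * Real.cos (v'' / b₃)) v') v +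
            (m ^ 2 + 1) * (b₃ * Real.cos (v / b₃)) := by
        funext u'
        have h1 : (fun u'' => psiRS m b₀ b₂ b₃ u'' v 5) =
            fun _ => b₃ * Real.cos (v / b₃) := rfl
        have h2 : (fun v'' => psiRS m b₀ b₂ b₃ u' v'' 5) =
            fun v'' => b₃ * Real.cos (v'' / b₃) := rfl
        simp only [WRS, nuRS, h1, h2, deriv_const, psiRS5]
        rw [if_neg (show (5 : Fin 6) ≠ 0 by decide)]
        norm_num
      rw [h0]; exact deriv_const _ _
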